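/- Let k=2^n and π_n the bit-reversal permutation. Then ∑_{j=0}^{k−1} j²·π_n(j) = k⁴/6 − (20−6n)k³/48 + (8−3n)k²/24 − k/12. -/

import Mathlib

/-- The bit-reversal permutation on `n` bits: reverses the binary digits of `j`. -/
def bitrev (n j : ℕ) : ℕ := ∑ i ∈ Finset.range n, (j / 2 ^ i % 2) * 2 ^ (n - 1 - i)

lemma sum_split (f : ℕ → ℝ) (m : ℕ) :
    ∑ j ∈ Finset.range (2*m), f j
      = ∑ q ∈ Finset.range m, (f (2*q) + f (2*q+1)) := by
  induction m with
  | zero => simp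
  | succ m ih =>
    have h : 2*(m+1) = (2*m+1)+1 := by ring
    rw [h, Finset.sum_range_succ, Finset.sum_range_succ, Finset.sum_range_succ, ih]; ring

lemma bitrev_succ (n q b : ℕ) (hb : b < 2) :
    bitrev (n+1) (2*q + b) = b * 2^n + bitrev n q := by
  unfold bitrev
  rw [Finset.sum_range_succ']
  have h0 : (2*q+b)/2^0 % 2 * 2^(n+1-1-0) = b * 2^n := by
    simp [Nat.mul_add_mod, Nat.mod_eq_of_lt hb]
  rw [h0, add_comm]
  congr 1
  apply Finset.sum_congr rfl
  intro i _
  have hdiv : (2*q+b)/2^(i+1) = q / 2^i := by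
    have : (2:ℕ)^(i+1) = 2 * 2^i := by ring
    rw [this, ← Nat.div_div_eq_div_mul, Nat.mul_add_div (by norm_num),
      Nat.div_eq_of_lt hb, Nat.add_zero]
  have hexp : n+1-1-(i+1) = n-1-i := by omega
  rw [hdiv, hexp]

lemma bitrev_even (n q : ℕ) : bitrev (n+1) (2*q) = bitrev n q := by
  have := bitrev_succ n q 0 (by norm_num); simpa using this

lemma bitrev_odd (n q : ℕ) : bitrev (n+1) (2*q+1) = 2^n + bitrev n q := by
  have := bitrev_succ n q 1 (by norm_num); simpa using this

lemma sumId (m : ℕ) : ∑ i ∈ Finset.range m, (i:ℝ) = m*(m-1)/2 := by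
  induction m with
  | zero => simp
  | succ m ih => rw [Finset.sum_range_succ, ih]; push_cast; ring

lemma sumSq (m : ℕ) : ∑ i ∈ Finset.range m, (i:ℝ)^2 = m*(m-1)*(2*m-1)/6 := by
  induction m with
  | zero => simp
  | succ m ih => rw [Finset.sum_range_succ, ih]; push_cast; ring

lemma sumR (n : ℕ) : ∑ j ∈ Finset.range (2^n), (bitrev n j : ℝ) = ((4:ℝ)^n - 2^n)/2 := by
  induction n with
  | zero => simp [bitrev]
  | succ n ih =>
    have h : (2:ℕ)^(n+1) = 2 * 2^n := by ring
    rw [h, sum_split (fun j => (bitrev (n+1) j : ℝ))]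
    simp only [bitrev_even, bitrev_odd]
    push_cast
    rw [Finset.sum_add_distrib, Finset.sum_add_distrib, Finset.sum_const, ih]
    simp only [Finset.card_range, nsmul_eq_mul]
    have h4 : (4:ℝ)^(n+1) = 4 * (2^n * 2^n) := by
      rw [pow_succ, ← mul_pow]; ring_nf
    push_cast
    rw [h4, show ((4:ℝ)^n = 2^n*2^n) from by rw [← mul_pow]; norm_num]
    ring

lemma pow4 (n : ℕ) : (4:ℝ)^n = 2^n * 2^n := by rw [← mul_pow]; norm_num

lemma pow8 (n : ℕ) : (8:ℝ)^n = 2^n * (2^n * 2^n) := by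
  rw [← mul_pow, ← mul_pow]; norm_num

lemma pow16 (n : ℕ) : (16:ℝ)^n = 2^n * (2^n * (2^n * 2^n)) := by
  rw [← mul_pow, ← mul_pow, ← mul_pow]; norm_num

lemma sumT (n : ℕ) : ∑ j ∈ Finset.range (2^n), (j:ℝ) * (bitrev n j : ℝ)
    = (8:ℝ)^n/4 + n*(4:ℝ)^n/8 - (4:ℝ)^n/2 + (2:ℝ)^n/4 := by
  induction n with
  | zero => norm_num
  | succ n ih =>
    have h : (2:ℕ)^(n+1) = 2 * 2^n := by ring
    rw [h, sum_split (fun j => (j:ℝ) * (bitrev (n+1) j : ℝ))]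
    have key : ∀ q ∈ Finset.range (2^n),
        ((2*q : ℕ):ℝ) * (bitrev (n+1) (2*q) : ℝ)
          + ((2*q+1 : ℕ):ℝ) * (bitrev (n+1) (2*q+1) : ℝ)
        = 4*((q:ℝ)*(bitrev n q : ℝ)) + (bitrev n q : ℝ)
          + (2*2^n)*(q:ℝ) + 2^n := by
      intro q _
      rw [bitrev_even, bitrev_odd]
      push_cast
      ring
    rw [Finset.sum_congr rfl key]
    rw [Finset.sum_add_distrib, Finset.sum_add_distrib, Finset.sum_add_distrib,
      ← Finset.mul_sum, ← Finset.mul_sum, Finset.sum_const, Finset.card_range,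
      nsmul_eq_mul, ih, sumR, sumId]
    simp only [pow_succ]
    rw [pow4, pow8]
    push_cast
    ring

lemma sumS (n : ℕ) : ∑ j ∈ Finset.range (2^n), (j:ℝ)^2 * (bitrev n j : ℝ)
    = (16:ℝ)^n/6 - (20 - 6*(n:ℝ))*(8:ℝ)^n/48 + (8 - 3*(n:ℝ))*(4:ℝ)^n/24 - (2:ℝ)^n/12 := by
  induction n with
  | zero => norm_num
  | succ n ih =>
    have h : (2:ℕ)^(n+1) = 2 * 2^n := by ring
    rw [h, sum_split (fun j => (j:ℝ)^2 * (bitrev (n+1) j : ℝ))]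
    have key : ∀ q ∈ Finset.range (2^n),
        ((2*q : ℕ):ℝ)^2 * (bitrev (n+1) (2*q) : ℝ)
          + ((2*q+1 : ℕ):ℝ)^2 * (bitrev (n+1) (2*q+1) : ℝ)
        = 8*((q:ℝ)^2*(bitrev n q : ℝ)) + 4*((q:ℝ)*(bitrev n q : ℝ)) + (bitrev n q : ℝ)
          + (4*2^n)*(q:ℝ)^2 + (4*2^n)*(q:ℝ) + 2^n := by
      intro q _
      rw [bitrev_even, bitrev_odd]
      push_cast
      ring
    rw [Finset.sum_congr rfl key]
    rw [Finset.sum_add_distrib, Finset.sum_add_distrib, Finset.sum_add_distrib,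
      Finset.sum_add_distrib, Finset.sum_add_distrib,
      ← Finset.mul_sum, ← Finset.mul_sum, ← Finset.mul_sum, ← Finset.mul_sum,
      Finset.sum_const, Finset.card_range, nsmul_eq_mul,
      ih, sumT, sumR, sumSq, sumId]
    simp only [pow_succ]
    rw [pow4, pow8, pow16]
    push_cast
    ring

theorem J2_bitrev (n k : ℕ) (hk : k = 2 ^ n) :
    ((∑ j ∈ Finset.range k, j ^ 2 * bitrev n j : ℕ) : ℝ)
      = (k : ℝ) ^ 4 / 6 - (20 - 6 * (n : ℝ)) * (k : ℝ) ^ 3 / 48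
        + (8 - 3 * (n : ℝ)) * (k : ℝ) ^ 2 / 24 - (k : ℝ) / 12 := by
  subst hk
  push_cast
  rw [sumS, pow16, pow8, pow4]
  ring
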